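/- Let (p, l) be an independent affine-normalized realization of an incidence structure S = (P, L, I). Let j₁, j₂ ∈ L be distinct with l j₁ ≠ l j₂, and let q ∈ ℝ² satisfy ⟪q, l j₁⟫ = -1 and ⟪q, l j₂⟫ = -1 (q is the affine-normalized coordinate vector of the intersection point of the two lines), and suppose q ≠ p i for every i ∈ P. Let S' = (P', L, I') be the incidence structure obtained by adjoining a new point i₀ to P with incidences (i₀, j₁) and (i₀, j₂), and extend p by setting p i₀ = q. Then the resulting affine-normalized realization of S' is independent. -/

import Mathlib

open Matrix

/-- adjoining to an independent affine-normalized realization a new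
point `q` on two distinct lines `j₁, j₂` (a point not already present), with
the two incidences `(i₀, j₁)` and `(i₀, j₂)`, yields an independent
realization. The extended point set is `Option P`, with `none` the new point
`i₀` realized by `q`. -/
theorem point_extension_preserves_independence
    {P L : Type*} [Fintype P] [Fintype L] (I : Set (P × L))
    (p : P → Fin 2 → ℝ) (l : L → Fin 2 → ℝ)
    (hreal : ∀ ij ∈ I, p ij.1 ⬝ᵥ l ij.2 = -1)
    (hindep : ∀ ω : P × L → ℝ, (∀ ij ∉ I, ω ij = 0) →
      (∀ j, ∑ i, ω (i, j) • p i = 0) → (∀ i, ∑ j, ω (i, j) • l j = 0) → ω = 0)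
    (j₁ j₂ : L) (hne : j₁ ≠ j₂) (hlne : l j₁ ≠ l j₂)
    (q : Fin 2 → ℝ) (hq1 : q ⬝ᵥ l j₁ = -1) (hq2 : q ⬝ᵥ l j₂ = -1)
    (hqnew : ∀ i, q ≠ p i) :
    ∀ ω : Option P × L → ℝ,
      (∀ ij ∉ ({ij : Option P × L | ∃ r ∈ I, ij = (some r.1, r.2)} ∪
        {((none : Option P), j₁), ((none : Option P), j₂)}), ω ij = 0) →
      (∀ j : L, ∑ i : Option P, ω (i, j) • (i.elim q p) = 0) →
      (∀ i : Option P, ∑ j, ω (i, j) • l j = 0) →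
      ω = 0 := by
  intro ω hsupp hcol hrow
  classical
  -- ω (none, j) = 0 for j ∉ {j₁, j₂}
  have hnz : ∀ j, j ≠ j₁ → j ≠ j₂ → ω (none, j) = 0 := by
    intro j h1 h2
    apply hsupp
    intro hmem
    rcases hmem with ⟨r, _, hr⟩ | hmem
    · exact absurd hr (by simp)
    · rcases hmem with h | h
      · exact h1 (congrArg Prod.snd h)
      · exact h2 (congrArg Prod.snd h)
  -- row condition at `none` reduces to a combination of `l j₁` and `l j₂`
  have hrow0 : ω (none, j₁) • l j₁ + ω (none, j₂) • l j₂ = 0 := by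
    have := hrow none
    rw [show (∑ j, ω (none, j) • l j) =
        ∑ j ∈ ({j₁, j₂} : Finset L), ω (none, j) • l j from ?_] at this
    · rwa [Finset.sum_insert (by simpa using hne), Finset.sum_singleton] at this
    · symm
      apply Finset.sum_subset (Finset.subset_univ _)
      intro j _ hj
      simp only [Finset.mem_insert, Finset.mem_singleton, not_or] at hj
      rw [hnz j hj.1 hj.2, zero_smul]
  -- deduce both coefficients vanish, using q
  have hdot : ∀ (a b : ℝ) (u v : Fin 2 → ℝ), q ⬝ᵥ (a • u + b • v) = a * (q ⬝ᵥ u) + b * (q ⬝ᵥ v) := by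
    intro a b u v
    simp [dotProduct_add, dotProduct_smul, smul_eq_mul]
  have hsum : ω (none, j₁) + ω (none, j₂) = 0 := by
    have := congrArg (fun v => q ⬝ᵥ v) hrow0
    simp only [hdot, hq1, hq2, dotProduct_zero] at this
    linarith
  have h1 : ω (none, j₁) = 0 := by
    by_contra ha
    apply hlne
    have hb : ω (none, j₂) = -ω (none, j₁) := by linarith
    rw [hb, neg_smul, add_neg_eq_zero] at hrow0
    exact smul_right_injective (Fin 2 → ℝ) ha hrow0
  have h2 : ω (none, j₂) = 0 := by linarith
  have hnone : ∀ j, ω (none, j) = 0 := by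
    intro j
    by_cases hj1 : j = j₁
    · rwa [hj1]
    by_cases hj2 : j = j₂
    · rwa [hj2]
    exact hnz j hj1 hj2
  -- restricted stress
  have hω' : (fun ij : P × L => ω (some ij.1, ij.2)) = 0 := by
    apply hindep
    · intro ij hij
      apply hsupp
      intro hmem
      rcases hmem with ⟨r, hr, heq⟩ | hmem
      · obtain ⟨h1, h2⟩ := Prod.mk.injEq .. ▸ heq
        have : ij = r := Prod.ext (Option.some_injective _ (by exact h1)) h2
        exact hij (this ▸ hr)
      · rcases hmem with h | h <;> exact absurd h (by simp)
    · intro j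
      have := hcol j
      rw [Fintype.sum_option] at this
      simpa [hnone j] using this
    · intro i
      exact hrow (some i)
  funext ij
  obtain ⟨i, j⟩ := ij
  cases i with
  | none => exact hnone j
  | some i => exact congrFun hω' (i, j)
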